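/- arXiv:2303.12687 — 3 statements merged into one kernel-verified Lean document; each statement's English description precedes it below -/
import Mathlib

section
/- Suppose V = X (i.e., v is the identity on 𝒳) and λ(p) ≥ 0 for all p ∈ (0,1). Let τ : 𝒳 → ℝ be measurable with τ∘X a version of E[Y¹ − Y⁰ | σ(X)]. Then for every measurable g : 𝒳 → ℝ (with all expectations below finite), E[w·(φ − τ(X))²] ≤ E[w·(φ − g(X))²]; i.e., the conditional average treatment effect minimizes the Neyman-orthogonal weighted population risk for every choice of the weight function λ. -/
open MeasureTheory ProbabilityTheory

/-- The weight `w = (A − π(X))·λ'(π(X)) + λ(π(X))`. -/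
noncomputable def wFun {Ω 𝓧 : Type*} (lam lam' : ℝ → ℝ) (A : Ω → ℝ) (X : Ω → 𝓧)
    (p : 𝓧 → ℝ) (ω : Ω) : ℝ :=
  (A ω - p (X ω)) * lam' (p (X ω)) + lam (p (X ω))

/-- The pseudo-outcome
`φ = (λ(π(X))/w)·[(A/π(X))(Y − Q¹(X)) − ((1−A)/(1−π(X)))(Y − Q⁰(X))] + Q¹(X) − Q⁰(X)`. -/
noncomputable def phiFun {Ω 𝓧 : Type*} (lam lam' : ℝ → ℝ) (A Y : Ω → ℝ) (X : Ω → 𝓧)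
    (p q0 q1 : 𝓧 → ℝ) (ω : Ω) : ℝ :=
  lam (p (X ω)) / wFun lam lam' A X p ω *
      (A ω / p (X ω) * (Y ω - q1 (X ω)) - (1 - A ω) / (1 - p (X ω)) * (Y ω - q0 (X ω)))
    + q1 (X ω) - q0 (X ω)

lemma condexp_sup_aux {Ω 𝓧 : Type*} [mΩ : MeasurableSpace Ω] [StandardBorelSpace Ω]
    [MeasurableSpace 𝓧]
    (P : Measure Ω) [IsProbabilityMeasure P]
    (X : Ω → 𝓧) (hX : Measurable X)
    (A : Ω → ℝ) (hA : Measurable A) (hA01 : ∀ ω, A ω = 0 ∨ A ω = 1)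
    (Z : Ω → ℝ × ℝ) (hZ : Measurable Z)
    (pr : 𝓧 → ℝ) (hprm : Measurable pr) (hpr : ∀ x, 0 < pr x ∧ pr x < 1)
    (hprCE : (fun ω => pr (X ω)) =ᵐ[P] P[A | MeasurableSpace.comap X inferInstance])
    (hCE : CondIndepFun (MeasurableSpace.comap X inferInstance) hX.comap_le Z A P) :
    (fun ω => pr (X ω)) =ᵐ[P]
      P[A | MeasurableSpace.comap X inferInstance ⊔ MeasurableSpace.comap Z inferInstance] := by
  have hm' : MeasurableSpace.comap X inferInstance ≤ mΩ := hX.comap_le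
  have hm2 : MeasurableSpace.comap Z inferInstance ≤ mΩ := hZ.comap_le
  have hG : MeasurableSpace.comap X inferInstance ⊔ MeasurableSpace.comap Z inferInstance
      ≤ mΩ := sup_le hm' hm2
  have hXm' : Measurable[MeasurableSpace.comap X inferInstance] X := fun s hs => ⟨s, hs, rfl⟩
  have hAint : Integrable A P := by
    refine (integrable_const (1:ℝ)).mono' hA.aestronglyMeasurable ?_
    filter_upwards with ω
    rcases hA01 ω with h | h <;> simp [h]
  have hpint : Integrable (fun ω => pr (X ω)) P := by
    refine (integrable_const (1:ℝ)).mono' ((hprm.comp hX)).aestronglyMeasurable ?_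
    filter_upwards with ω
    have h1 := (hpr (X ω)).1
    have h2 := (hpr (X ω)).2
    rw [Real.norm_eq_abs, abs_of_nonneg h1.le]
    linarith
  -- the generating π-system
  have hgen : MeasurableSpace.comap X inferInstance ⊔ MeasurableSpace.comap Z inferInstance
      = MeasurableSpace.generateFrom
        {s : Set Ω | ∃ t u, MeasurableSet t ∧ MeasurableSet u ∧ s = X ⁻¹' t ∩ Z ⁻¹' u} := by
    refine le_antisymm (sup_le ?_ ?_) (MeasurableSpace.generateFrom_le ?_)
    · rintro s ⟨t, ht, rfl⟩
      exact MeasurableSpace.measurableSet_generateFrom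
        ⟨t, Set.univ, ht, MeasurableSet.univ, by simp⟩
    · rintro s ⟨u, hu, rfl⟩
      exact MeasurableSpace.measurableSet_generateFrom
        ⟨Set.univ, u, MeasurableSet.univ, hu, by simp⟩
    · rintro s ⟨t, u, ht, hu, rfl⟩
      refine MeasurableSet.inter ?_ ?_
      · exact (le_sup_left : MeasurableSpace.comap X inferInstance ≤ _) _ ⟨t, ht, rfl⟩
      · exact (le_sup_right : MeasurableSpace.comap Z inferInstance ≤ _) _ ⟨u, hu, rfl⟩
  have hpi : IsPiSystem
      {s : Set Ω | ∃ t u, MeasurableSet t ∧ MeasurableSet u ∧ s = X ⁻¹' t ∩ Z ⁻¹' u} := by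
    rintro s ⟨t1, u1, ht1, hu1, rfl⟩ s' ⟨t2, u2, ht2, hu2, rfl⟩ -
    refine ⟨t1 ∩ t2, u1 ∩ u2, ht1.inter ht2, hu1.inter hu2, ?_⟩
    rw [Set.preimage_inter, Set.preimage_inter, Set.inter_inter_inter_comm]
  -- the basic case
  have key : ∀ t u, MeasurableSet t → MeasurableSet u →
      ∫ ω in X ⁻¹' t ∩ Z ⁻¹' u, pr (X ω) ∂P = ∫ ω in X ⁻¹' t ∩ Z ⁻¹' u, A ω ∂P := by
    intro t su ht hsu
    have hu' : MeasurableSet (Z ⁻¹' su) := hZ hsu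
    have ht' : MeasurableSet (X ⁻¹' t) := hX ht
    have htm : MeasurableSet[MeasurableSpace.comap X inferInstance] (X ⁻¹' t) := ⟨t, ht, rfl⟩
    have hci := (condIndepFun_iff_condExp_inter_preimage_eq_mul
      (μ := P) (hm' := hX.comap_le) hZ hA).mp hCE su {1} hsu (measurableSet_singleton 1)
    -- indicator identities
    have hAind : (A ⁻¹' {1}).indicator (fun _ => (1:ℝ)) = A := by
      funext ω
      rcases hA01 ω with h | h <;>
        simp [Set.indicator_apply, Set.mem_preimage, Set.mem_singleton_iff, h]
    have hindAZ : (Z ⁻¹' su ∩ A ⁻¹' {1}).indicator (fun _ => (1:ℝ))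
        = (Z ⁻¹' su).indicator A := by
      funext ω
      by_cases hz : ω ∈ Z ⁻¹' su
      · rcases hA01 ω with h | h <;>
          simp [Set.indicator_apply, hz, Set.mem_preimage, Set.mem_singleton_iff, h]
      · simp [Set.indicator_apply, hz]
    have hindpr : (Z ⁻¹' su).indicator (fun ω => pr (X ω))
        = (fun ω => pr (X ω)) * (Z ⁻¹' su).indicator (fun _ => (1:ℝ)) := by
      funext ω
      by_cases hz : ω ∈ Z ⁻¹' su <;> simp [Set.indicator_apply, hz]
    -- integrability
    have hint1 : Integrable ((Z ⁻¹' su).indicator A) P := hAint.indicator hu'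
    have hint2 : Integrable ((Z ⁻¹' su).indicator (fun ω => pr (X ω))) P :=
      hpint.indicator hu'
    have hint3 : Integrable ((Z ⁻¹' su).indicator (fun _ => (1:ℝ))) P :=
      (integrable_const _).indicator hu'
    have hint2' : Integrable ((fun ω => pr (X ω)) * (Z ⁻¹' su).indicator (fun _ => (1:ℝ))) P :=
      hint2.congr (by rw [hindpr])
    -- conditional expectation computations
    have hprXm' : StronglyMeasurable[MeasurableSpace.comap X inferInstance]
        (fun ω => pr (X ω)) := (hprm.comp hXm').stronglyMeasurable
    have hcondA : P[(Z ⁻¹' su).indicator A | MeasurableSpace.comap X inferInstance]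
        =ᵐ[P] fun ω => (P⟦Z ⁻¹' su | MeasurableSpace.comap X inferInstance⟧) ω * pr (X ω) := by
      have e0 : P[(Z ⁻¹' su).indicator A | MeasurableSpace.comap X inferInstance]
          = P[(Z ⁻¹' su ∩ A ⁻¹' {1}).indicator (fun _ => (1:ℝ)) |
              MeasurableSpace.comap X inferInstance] := by
        rw [hindAZ]
      rw [e0]
      refine hci.trans ?_
      have h4 : P⟦A ⁻¹' {1} | MeasurableSpace.comap X inferInstance⟧
          =ᵐ[P] fun ω => pr (X ω) := by
        have e1 : P⟦A ⁻¹' {1} | MeasurableSpace.comap X inferInstance⟧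
            = P[A | MeasurableSpace.comap X inferInstance] := by rw [hAind]
        rw [e1]
        exact hprCE.symm
      filter_upwards [h4] with ω h4ω
      rw [h4ω]
    have hcondpr : P[(Z ⁻¹' su).indicator (fun ω => pr (X ω)) |
          MeasurableSpace.comap X inferInstance]
        =ᵐ[P] fun ω => pr (X ω) * (P⟦Z ⁻¹' su | MeasurableSpace.comap X inferInstance⟧) ω := by
      have e0 : P[(Z ⁻¹' su).indicator (fun ω => pr (X ω)) |
            MeasurableSpace.comap X inferInstance]
          = P[(fun ω => pr (X ω)) * (Z ⁻¹' su).indicator (fun _ => (1:ℝ)) |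
              MeasurableSpace.comap X inferInstance] := by
        rw [hindpr]
      rw [e0]
      exact condExp_mul_of_stronglyMeasurable_left hprXm' hint2' hint3
    -- set integrals
    calc ∫ ω in X ⁻¹' t ∩ Z ⁻¹' su, pr (X ω) ∂P
        = ∫ ω in X ⁻¹' t, (Z ⁻¹' su).indicator (fun ω => pr (X ω)) ω ∂P := by
          rw [setIntegral_indicator hu']
      _ = ∫ ω in X ⁻¹' t, (P[(Z ⁻¹' su).indicator (fun ω => pr (X ω)) |
            MeasurableSpace.comap X inferInstance]) ω ∂P :=
          (setIntegral_condExp hm' hint2 htm).symm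
      _ = ∫ ω in X ⁻¹' t,
            pr (X ω) * (P⟦Z ⁻¹' su | MeasurableSpace.comap X inferInstance⟧) ω ∂P := by
          refine setIntegral_congr_ae ht' ?_
          filter_upwards [hcondpr] with ω h _
          exact h
      _ = ∫ ω in X ⁻¹' t, (P[(Z ⁻¹' su).indicator A |
            MeasurableSpace.comap X inferInstance]) ω ∂P := by
          refine setIntegral_congr_ae ht' ?_
          filter_upwards [hcondA] with ω h _
          rw [h, mul_comm]
      _ = ∫ ω in X ⁻¹' t, (Z ⁻¹' su).indicator A ω ∂P := setIntegral_condExp hm' hint1 htm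
      _ = ∫ ω in X ⁻¹' t ∩ Z ⁻¹' su, A ω ∂P := setIntegral_indicator hu'
  -- extend to the generated σ-algebra by the π-λ theorem
  have hEq : ∀ s, MeasurableSet[MeasurableSpace.comap X inferInstance
      ⊔ MeasurableSpace.comap Z inferInstance] s →
      ∫ ω in s, pr (X ω) ∂P = ∫ ω in s, A ω ∂P := by
    intro s hs
    have htot : ∫ ω, pr (X ω) ∂P = ∫ ω, A ω ∂P := by
      rw [integral_congr_ae hprCE]
      exact integral_condExp hm'
    refine MeasurableSpace.induction_on_inter
      (m := MeasurableSpace.comap X inferInstance ⊔ MeasurableSpace.comap Z inferInstance)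
      (C := fun s _ => ∫ ω in s, pr (X ω) ∂P = ∫ ω in s, A ω ∂P) hgen hpi ?_ ?_ ?_ ?_ s hs
    · simp
    · rintro s' ⟨t, u, ht, hu, rfl⟩
      exact key t u ht hu
    · intro s' hs' hCs'
      have hs'' : MeasurableSet s' := hG s' hs'
      have h1 := integral_add_compl hs'' hpint
      have h2 := integral_add_compl hs'' hAint
      linarith [htot]
    · intro f hdisj hmeas hCf
      have hmeas' : ∀ i, MeasurableSet (f i) := fun i => hG _ (hmeas i)
      rw [integral_iUnion hmeas' hdisj hpint.integrableOn,
        integral_iUnion hmeas' hdisj hAint.integrableOn]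
      exact tsum_congr hCf
  -- conclude
  refine ae_eq_condExp_of_forall_setIntegral_eq hG hAint
    (fun s _ _ => hpint.integrableOn) (fun s hs _ => hEq s hs) ?_
  have hXG : Measurable[MeasurableSpace.comap X inferInstance
      ⊔ MeasurableSpace.comap Z inferInstance] X := hXm'.mono le_sup_left le_rfl
  exact ((hprm.comp hXG).stronglyMeasurable).aestronglyMeasurable


open MeasureTheory ProbabilityTheory

/-- Corollary 1: when `V = X` and `λ ≥ 0` on `(0,1)`, the CATE `τ`
minimizes the Neyman-orthogonal weighted population risk for every weight function `λ`. -/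
theorem stmt14 {Ω 𝓧 : Type*} [MeasurableSpace Ω] [StandardBorelSpace Ω]
    [MeasurableSpace 𝓧]
    (P : Measure Ω) [IsProbabilityMeasure P]
    (X : Ω → 𝓧) (hX : Measurable X)
    (A Y0 Y1 Y : Ω → ℝ) (hA : Measurable A) (hY0 : Measurable Y0) (hY1 : Measurable Y1)
    (hA01 : ∀ ω, A ω = 0 ∨ A ω = 1)
    (hYdef : ∀ ω, Y ω = A ω * Y1 ω + (1 - A ω) * Y0 ω)
    (pr : 𝓧 → ℝ) (hprm : Measurable pr) (hpr : ∀ x, 0 < pr x ∧ pr x < 1)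
    (hprCE : (fun ω => pr (X ω)) =ᵐ[P] P[A | MeasurableSpace.comap X inferInstance])
    (hCE : CondIndepFun (MeasurableSpace.comap X inferInstance) hX.comap_le
      (fun ω => (Y0 ω, Y1 ω)) A P)
    (Q0 Q1 : 𝓧 → ℝ) (hQ0m : Measurable Q0) (hQ1m : Measurable Q1)
    (hQ1 : P[fun ω => A ω * (Y ω - Q1 (X ω)) | MeasurableSpace.comap X inferInstance]
      =ᵐ[P] fun _ => (0 : ℝ))
    (hQ0 : P[fun ω => (1 - A ω) * (Y ω - Q0 (X ω)) | MeasurableSpace.comap X inferInstance]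
      =ᵐ[P] fun _ => (0 : ℝ))
    (lam lam' : ℝ → ℝ) (hlam : ∀ p, HasDerivAt lam (lam' p) p) (hlam' : Continuous lam')
    (hlamnn : ∀ p : ℝ, 0 < p → p < 1 → 0 ≤ lam p)
    (hw : ∀ᵐ ω ∂P, wFun lam lam' A X pr ω ≠ 0)
    (τ : 𝓧 → ℝ) (hτm : Measurable τ)
    (hτ : (fun ω => τ (X ω)) =ᵐ[P]
      P[fun ω => Y1 ω - Y0 ω | MeasurableSpace.comap X inferInstance])
    (hIY : Integrable (fun ω => Y1 ω - Y0 ω) P)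
    (g : 𝓧 → ℝ) (hg : Measurable g)
    (hI1 : Integrable (fun ω => wFun lam lam' A X pr ω *
      (phiFun lam lam' A Y X pr Q0 Q1 ω - τ (X ω)) ^ 2) P)
    (hI2 : Integrable (fun ω => wFun lam lam' A X pr ω *
      (phiFun lam lam' A Y X pr Q0 Q1 ω - g (X ω)) ^ 2) P)
    (hI3 : Integrable (fun ω => lam (pr (X ω)) * ((Y1 ω - Y0 ω) - τ (X ω)) ^ 2) P)
    (hI4 : Integrable (fun ω => lam (pr (X ω)) * ((Y1 ω - Y0 ω) - g (X ω)) ^ 2) P) :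
    ∫ ω, wFun lam lam' A X pr ω * (phiFun lam lam' A Y X pr Q0 Q1 ω - τ (X ω)) ^ 2 ∂P
      ≤ ∫ ω, wFun lam lam' A X pr ω * (phiFun lam lam' A Y X pr Q0 Q1 ω - g (X ω)) ^ 2 ∂P := by
    classical
  have hlamc : Continuous lam := by
    rw [continuous_iff_continuousAt]; exact fun q => (hlam q).continuousAt
  have hm'le : MeasurableSpace.comap X inferInstance ≤ ‹MeasurableSpace Ω› := hX.comap_le
  have hXm' : Measurable[MeasurableSpace.comap X inferInstance] X := fun s hs => ⟨s, hs, rfl⟩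
  have hZ : Measurable (fun ω => (Y0 ω, Y1 ω)) := hY0.prodMk hY1
  have hGle : MeasurableSpace.comap X inferInstance
      ⊔ MeasurableSpace.comap (fun ω => (Y0 ω, Y1 ω)) inferInstance ≤ ‹MeasurableSpace Ω› :=
    sup_le hm'le hZ.comap_le
  have hXG : Measurable[MeasurableSpace.comap X inferInstance
      ⊔ MeasurableSpace.comap (fun ω => (Y0 ω, Y1 ω)) inferInstance] X :=
    hXm'.mono le_sup_left le_rfl
  have hZm2 : Measurable[MeasurableSpace.comap (fun ω => (Y0 ω, Y1 ω)) inferInstance]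
      (fun ω => (Y0 ω, Y1 ω)) := fun s hs => ⟨s, hs, rfl⟩
  have hZG : Measurable[MeasurableSpace.comap X inferInstance
      ⊔ MeasurableSpace.comap (fun ω => (Y0 ω, Y1 ω)) inferInstance] (fun ω => (Y0 ω, Y1 ω)) :=
    hZm2.mono le_sup_right le_rfl
  have hY0G : Measurable[MeasurableSpace.comap X inferInstance
      ⊔ MeasurableSpace.comap (fun ω => (Y0 ω, Y1 ω)) inferInstance] Y0 :=
    measurable_fst.comp hZG
  have hY1G : Measurable[MeasurableSpace.comap X inferInstance
      ⊔ MeasurableSpace.comap (fun ω => (Y0 ω, Y1 ω)) inferInstance] Y1 :=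
    measurable_snd.comp hZG
  have hprXG : Measurable[MeasurableSpace.comap X inferInstance
      ⊔ MeasurableSpace.comap (fun ω => (Y0 ω, Y1 ω)) inferInstance] (fun ω => pr (X ω)) :=
    hprm.comp hXG
  -- the auxiliary function K
  set Kf : Ω → ℝ := fun ω =>
    lam' (pr (X ω)) * (g (X ω) - τ (X ω)) * (2 * (Q1 (X ω) - Q0 (X ω)) - τ (X ω) - g (X ω))
      + 2 * lam (pr (X ω)) * (g (X ω) - τ (X ω)) *
        ((Y1 ω - Q1 (X ω)) / pr (X ω) + (Y0 ω - Q0 (X ω)) / (1 - pr (X ω))) with hKfdef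
  -- the key pointwise identity
  have hID : (fun ω => wFun lam lam' A X pr ω * (phiFun lam lam' A Y X pr Q0 Q1 ω - τ (X ω)) ^ 2
        - wFun lam lam' A X pr ω * (phiFun lam lam' A Y X pr Q0 Q1 ω - g (X ω)) ^ 2)
      =ᵐ[P] (fun ω => Kf ω * (A ω - pr (X ω))
        - lam (pr (X ω)) * (g (X ω) - τ (X ω)) ^ 2
        + (2 * lam (pr (X ω)) * (g (X ω) - τ (X ω))) * ((Y1 ω - Y0 ω) - τ (X ω))) := by
    filter_upwards [hw] with ω hwω
    obtain ⟨hp0, hp1⟩ := hpr (X ω)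
    have hp0' : pr (X ω) ≠ 0 := ne_of_gt hp0
    have hp1' : (1:ℝ) - pr (X ω) ≠ 0 := sub_ne_zero.mpr (ne_of_lt hp1).symm
    simp only [hKfdef]
    simp only [wFun, phiFun] at hwω ⊢
    rw [hYdef ω]
    rcases hA01 ω with h | h
    · rw [h] at hwω ⊢
      have hw' : lam (pr (X ω)) - pr (X ω) * lam' (pr (X ω)) ≠ 0 := by
        intro hc; apply hwω; linarith
      have e : ((0:ℝ) - pr (X ω)) * lam' (pr (X ω)) + lam (pr (X ω))
          = lam (pr (X ω)) - pr (X ω) * lam' (pr (X ω)) := by ring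
      rw [e]
      field_simp
      ring
    · rw [h] at hwω ⊢
      field_simp
      ring
  -- integrability facts
  have hD : Integrable (fun ω =>
      wFun lam lam' A X pr ω * (phiFun lam lam' A Y X pr Q0 Q1 ω - τ (X ω)) ^ 2
        - wFun lam lam' A X pr ω * (phiFun lam lam' A Y X pr Q0 Q1 ω - g (X ω)) ^ 2) P :=
    hI1.sub hI2
  have hLm2 : Integrable (fun ω => lam (pr (X ω)) * (g (X ω) - τ (X ω)) ^ 2) P := by
    refine Integrable.mono' ((hI3.const_mul 2).add (hI4.const_mul 2))
      ((hlamc.measurable.comp (hprm.comp hX)).mul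
        (((hg.comp hX).sub (hτm.comp hX)).pow_const 2)).aestronglyMeasurable ?_
    filter_upwards with ω
    have hl := hlamnn _ (hpr (X ω)).1 (hpr (X ω)).2
    rw [Real.norm_eq_abs, abs_of_nonneg (mul_nonneg hl (sq_nonneg _))]
    simp only [Pi.add_apply]
    nlinarith [mul_nonneg hl
      (sq_nonneg (((Y1 ω - Y0 ω) - τ (X ω)) + ((Y1 ω - Y0 ω) - g (X ω))))]
  have hτint : Integrable (fun ω => τ (X ω)) P := integrable_condExp.congr hτ.symm
  have hZint : Integrable (fun ω => (Y1 ω - Y0 ω) - τ (X ω)) P := hIY.sub hτint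
  have hD' : Integrable (fun ω => lam (pr (X ω)) * ((Y1 ω - Y0 ω) - τ (X ω)) ^ 2
      - lam (pr (X ω)) * ((Y1 ω - Y0 ω) - g (X ω)) ^ 2) P := hI3.sub hI4
  have hsum : Integrable (fun ω => (lam (pr (X ω)) * ((Y1 ω - Y0 ω) - τ (X ω)) ^ 2
      - lam (pr (X ω)) * ((Y1 ω - Y0 ω) - g (X ω)) ^ 2)
      + lam (pr (X ω)) * (g (X ω) - τ (X ω)) ^ 2) P := hD'.add hLm2
  have hXi' : Integrable (fun ω => (2 * lam (pr (X ω)) * (g (X ω) - τ (X ω)))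
      * ((Y1 ω - Y0 ω) - τ (X ω))) P := by
    refine hsum.congr ?_
    filter_upwards with ω
    ring
  have hAK : Integrable (fun ω => Kf ω * (A ω - pr (X ω))) P := by
    have h0 : Integrable (fun ω =>
        (wFun lam lam' A X pr ω * (phiFun lam lam' A Y X pr Q0 Q1 ω - τ (X ω)) ^ 2
          - wFun lam lam' A X pr ω * (phiFun lam lam' A Y X pr Q0 Q1 ω - g (X ω)) ^ 2
          + lam (pr (X ω)) * (g (X ω) - τ (X ω)) ^ 2)
        - (2 * lam (pr (X ω)) * (g (X ω) - τ (X ω))) * ((Y1 ω - Y0 ω) - τ (X ω))) P :=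
      (hD.add hLm2).sub hXi'
    refine h0.congr ?_
    filter_upwards [hID] with ω h
    linarith [h]
  have hAint : Integrable A P := by
    refine (integrable_const (1:ℝ)).mono' hA.aestronglyMeasurable ?_
    filter_upwards with ω
    rcases hA01 ω with h | h <;> simp [h]
  have hpint : Integrable (fun ω => pr (X ω)) P := by
    refine (integrable_const (1:ℝ)).mono' ((hprm.comp hX)).aestronglyMeasurable ?_
    filter_upwards with ω
    have h1 := (hpr (X ω)).1
    have h2 := (hpr (X ω)).2
    rw [Real.norm_eq_abs, abs_of_nonneg h1.le]
    linarith
  have hApint : Integrable (fun ω => A ω - pr (X ω)) P := hAint.sub hpint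
  -- ∫ ξ = 0
  have hcond0 : P[fun ω => (Y1 ω - Y0 ω) - τ (X ω) | MeasurableSpace.comap X inferInstance]
      =ᵐ[P] fun _ => (0:ℝ) := by
    have h1 : P[fun ω => (Y1 ω - Y0 ω) - τ (X ω) | MeasurableSpace.comap X inferInstance]
        =ᵐ[P] fun ω => (P[fun ω => Y1 ω - Y0 ω | MeasurableSpace.comap X inferInstance]) ω
          - (P[fun ω => τ (X ω) | MeasurableSpace.comap X inferInstance]) ω :=
      condExp_sub hIY hτint _
    have h2 : P[fun ω => τ (X ω) | MeasurableSpace.comap X inferInstance]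
        = fun ω => τ (X ω) :=
      condExp_of_stronglyMeasurable hm'le ((hτm.comp hXm').stronglyMeasurable) hτint
    filter_upwards [h1, hτ] with ω e1 e3
    rw [e1, h2, ← e3, sub_self]
  have hfm : StronglyMeasurable[MeasurableSpace.comap X inferInstance]
      (fun ω => 2 * lam (pr (X ω)) * (g (X ω) - τ (X ω))) :=
    ((measurable_const.mul (hlamc.measurable.comp (hprm.comp hXm'))).mul
      ((hg.comp hXm').sub (hτm.comp hXm'))).stronglyMeasurable
  have hmul : Integrable ((fun ω => 2 * lam (pr (X ω)) * (g (X ω) - τ (X ω)))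
      * (fun ω => (Y1 ω - Y0 ω) - τ (X ω))) P := hXi'
  have hpull := condExp_mul_of_stronglyMeasurable_left hfm hmul hZint
  have hz1 : P[fun ω => (2 * lam (pr (X ω)) * (g (X ω) - τ (X ω)))
        * ((Y1 ω - Y0 ω) - τ (X ω)) | MeasurableSpace.comap X inferInstance]
      =ᵐ[P] fun ω => (2 * lam (pr (X ω)) * (g (X ω) - τ (X ω)))
        * (P[fun ω => (Y1 ω - Y0 ω) - τ (X ω) | MeasurableSpace.comap X inferInstance]) ω :=
    hpull
  have hz : P[fun ω => (2 * lam (pr (X ω)) * (g (X ω) - τ (X ω)))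
        * ((Y1 ω - Y0 ω) - τ (X ω)) | MeasurableSpace.comap X inferInstance]
      =ᵐ[P] fun _ => (0:ℝ) := by
    refine hz1.trans ?_
    filter_upwards [hcond0] with ω h
    rw [h, mul_zero]
  have hXi0 : ∫ ω, (2 * lam (pr (X ω)) * (g (X ω) - τ (X ω)))
      * ((Y1 ω - Y0 ω) - τ (X ω)) ∂P = 0 := by
    calc ∫ ω, (2 * lam (pr (X ω)) * (g (X ω) - τ (X ω))) * ((Y1 ω - Y0 ω) - τ (X ω)) ∂P
        = ∫ ω, (P[fun ω => (2 * lam (pr (X ω)) * (g (X ω) - τ (X ω)))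
            * ((Y1 ω - Y0 ω) - τ (X ω)) | MeasurableSpace.comap X inferInstance]) ω ∂P :=
          (integral_condExp hm'le).symm
      _ = 0 := by rw [integral_congr_ae hz]; simp
  -- ∫ K·(A − pr X) = 0
  have hkey := condexp_sup_aux P X hX A hA hA01 _ hZ pr hprm hpr hprCE hCE
  have hcondAp : P[fun ω => A ω - pr (X ω) | MeasurableSpace.comap X inferInstance
        ⊔ MeasurableSpace.comap (fun ω => (Y0 ω, Y1 ω)) inferInstance]
      =ᵐ[P] fun _ => (0:ℝ) := by
    have h1 : P[fun ω => A ω - pr (X ω) | MeasurableSpace.comap X inferInstance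
          ⊔ MeasurableSpace.comap (fun ω => (Y0 ω, Y1 ω)) inferInstance]
        =ᵐ[P] fun ω => (P[A | MeasurableSpace.comap X inferInstance
            ⊔ MeasurableSpace.comap (fun ω => (Y0 ω, Y1 ω)) inferInstance]) ω
          - (P[fun ω => pr (X ω) | MeasurableSpace.comap X inferInstance
            ⊔ MeasurableSpace.comap (fun ω => (Y0 ω, Y1 ω)) inferInstance]) ω :=
      condExp_sub hAint hpint _
    have h2 : P[fun ω => pr (X ω) | MeasurableSpace.comap X inferInstance
          ⊔ MeasurableSpace.comap (fun ω => (Y0 ω, Y1 ω)) inferInstance]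
        = fun ω => pr (X ω) :=
      condExp_of_stronglyMeasurable hGle ((hprm.comp hXG).stronglyMeasurable) hpint
    filter_upwards [h1, hkey] with ω e1 e3
    rw [e1, h2, ← e3, sub_self]
  have hKm : StronglyMeasurable[MeasurableSpace.comap X inferInstance
      ⊔ MeasurableSpace.comap (fun ω => (Y0 ω, Y1 ω)) inferInstance] Kf := by
    rw [hKfdef]
    refine Measurable.stronglyMeasurable (Measurable.add ?_ ?_)
    · exact ((hlam'.measurable.comp hprXG).mul ((hg.comp hXG).sub (hτm.comp hXG))).mul
        (((measurable_const.mul ((hQ1m.comp hXG).sub (hQ0m.comp hXG))).sub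
          (hτm.comp hXG)).sub (hg.comp hXG))
    · exact ((measurable_const.mul (hlamc.measurable.comp hprXG)).mul
        ((hg.comp hXG).sub (hτm.comp hXG))).mul
        (((hY1G.sub (hQ1m.comp hXG)).div hprXG).add
          ((hY0G.sub (hQ0m.comp hXG)).div (measurable_const.sub hprXG)))
  have hmulK : Integrable (Kf * (fun ω => A ω - pr (X ω))) P := hAK
  have hpullK := condExp_mul_of_stronglyMeasurable_left hKm hmulK hApint
  have hzK1 : P[fun ω => Kf ω * (A ω - pr (X ω)) | MeasurableSpace.comap X inferInstance
        ⊔ MeasurableSpace.comap (fun ω => (Y0 ω, Y1 ω)) inferInstance]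
      =ᵐ[P] fun ω => Kf ω * (P[fun ω => A ω - pr (X ω) |
        MeasurableSpace.comap X inferInstance
        ⊔ MeasurableSpace.comap (fun ω => (Y0 ω, Y1 ω)) inferInstance]) ω := hpullK
  have hzK : P[fun ω => Kf ω * (A ω - pr (X ω)) | MeasurableSpace.comap X inferInstance
        ⊔ MeasurableSpace.comap (fun ω => (Y0 ω, Y1 ω)) inferInstance]
      =ᵐ[P] fun _ => (0:ℝ) := by
    refine hzK1.trans ?_
    filter_upwards [hcondAp] with ω h
    rw [h, mul_zero]
  have hK0 : ∫ ω, Kf ω * (A ω - pr (X ω)) ∂P = 0 := by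
    calc ∫ ω, Kf ω * (A ω - pr (X ω)) ∂P
        = ∫ ω, (P[fun ω => Kf ω * (A ω - pr (X ω)) | MeasurableSpace.comap X inferInstance
            ⊔ MeasurableSpace.comap (fun ω => (Y0 ω, Y1 ω)) inferInstance]) ω ∂P :=
          (integral_condExp hGle).symm
      _ = 0 := by rw [integral_congr_ae hzK]; simp
  -- put everything together
  have hAKsub : Integrable (fun ω => Kf ω * (A ω - pr (X ω))
      - lam (pr (X ω)) * (g (X ω) - τ (X ω)) ^ 2) P := hAK.sub hLm2
  have e1 : ∫ ω, (Kf ω * (A ω - pr (X ω))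
        - lam (pr (X ω)) * (g (X ω) - τ (X ω)) ^ 2
        + (2 * lam (pr (X ω)) * (g (X ω) - τ (X ω))) * ((Y1 ω - Y0 ω) - τ (X ω))) ∂P
      = (∫ ω, (Kf ω * (A ω - pr (X ω))
          - lam (pr (X ω)) * (g (X ω) - τ (X ω)) ^ 2) ∂P)
        + ∫ ω, (2 * lam (pr (X ω)) * (g (X ω) - τ (X ω))) * ((Y1 ω - Y0 ω) - τ (X ω)) ∂P :=
    integral_add hAKsub hXi'
  have e2 : ∫ ω, (Kf ω * (A ω - pr (X ω))
        - lam (pr (X ω)) * (g (X ω) - τ (X ω)) ^ 2) ∂P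
      = (∫ ω, Kf ω * (A ω - pr (X ω)) ∂P)
        - ∫ ω, lam (pr (X ω)) * (g (X ω) - τ (X ω)) ^ 2 ∂P :=
    integral_sub hAK hLm2
  have hfinal : ∫ ω, (wFun lam lam' A X pr ω * (phiFun lam lam' A Y X pr Q0 Q1 ω - τ (X ω)) ^ 2
        - wFun lam lam' A X pr ω * (phiFun lam lam' A Y X pr Q0 Q1 ω - g (X ω)) ^ 2) ∂P
      = ∫ ω, (Kf ω * (A ω - pr (X ω))
        - lam (pr (X ω)) * (g (X ω) - τ (X ω)) ^ 2
        + (2 * lam (pr (X ω)) * (g (X ω) - τ (X ω))) * ((Y1 ω - Y0 ω) - τ (X ω))) ∂P :=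
    integral_congr_ae hID
  have hsub : ∫ ω, (wFun lam lam' A X pr ω * (phiFun lam lam' A Y X pr Q0 Q1 ω - τ (X ω)) ^ 2
        - wFun lam lam' A X pr ω * (phiFun lam lam' A Y X pr Q0 Q1 ω - g (X ω)) ^ 2) ∂P
      = (∫ ω, wFun lam lam' A X pr ω * (phiFun lam lam' A Y X pr Q0 Q1 ω - τ (X ω)) ^ 2 ∂P)
        - ∫ ω, wFun lam lam' A X pr ω * (phiFun lam lam' A Y X pr Q0 Q1 ω - g (X ω)) ^ 2 ∂P :=
    integral_sub hI1 hI2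
  have hnn : 0 ≤ ∫ ω, lam (pr (X ω)) * (g (X ω) - τ (X ω)) ^ 2 ∂P :=
    integral_nonneg fun ω => mul_nonneg (hlamnn _ (hpr (X ω)).1 (hpr (X ω)).2) (sq_nonneg _)
  linarith
end

section
/- The propensity-score-weighted conditional treatment effect equals the treated-group conditional treatment effect: E[π(X)·(Y¹ − Y⁰) | σ(V)] = E[A·(Y¹ − Y⁰) | σ(V)] P-almost surely. -/
open MeasureTheory ProbabilityTheory Filter

/-- the propensity-score-weighted conditional treatment effect equals the
treated-group conditional treatment effect:
`E[π(X)(Y¹−Y⁰) | σ(V)] = E[A(Y¹−Y⁰) | σ(V)]` a.s. -/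
theorem stmt15 {Ω 𝓧 𝓥 : Type*} [MeasurableSpace Ω] [StandardBorelSpace Ω]
    [MeasurableSpace 𝓧] [MeasurableSpace 𝓥]
    (P : Measure Ω) [IsProbabilityMeasure P]
    (X : Ω → 𝓧) (hX : Measurable X) (v : 𝓧 → 𝓥) (hv : Measurable v)
    (A Y0 Y1 : Ω → ℝ) (hA : Measurable A) (hY0 : Measurable Y0) (hY1 : Measurable Y1)
    (hA01 : ∀ ω, A ω = 0 ∨ A ω = 1)
    (pr : 𝓧 → ℝ) (hprm : Measurable pr) (hpr : ∀ x, 0 < pr x ∧ pr x < 1)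
    (hprCE : (fun ω => pr (X ω)) =ᵐ[P] P[A | MeasurableSpace.comap X inferInstance])
    (hCE : CondIndepFun (MeasurableSpace.comap X inferInstance) hX.comap_le
      (fun ω => (Y0 ω, Y1 ω)) A P)
    (hI1 : Integrable (fun ω => pr (X ω) * (Y1 ω - Y0 ω)) P)
    (hI2 : Integrable (fun ω => A ω * (Y1 ω - Y0 ω)) P) :
    P[fun ω => pr (X ω) * (Y1 ω - Y0 ω) |
        MeasurableSpace.comap (fun ω => v (X ω)) inferInstance]
      =ᵐ[P]
    P[fun ω => A ω * (Y1 ω - Y0 ω) |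
        MeasurableSpace.comap (fun ω => v (X ω)) inferInstance] := by
  let m0 : MeasurableSpace Ω := ‹MeasurableSpace Ω›
  have hWm : Measurable (fun ω => (Y0 ω, Y1 ω)) := hY0.prodMk hY1
  set W : Ω → ℝ × ℝ := fun ω => (Y0 ω, Y1 ω) with hWdef
  set mX : MeasurableSpace Ω := MeasurableSpace.comap X inferInstance with hmXdef
  set mW : MeasurableSpace Ω := MeasurableSpace.comap W inferInstance with hmWdef
  set mV : MeasurableSpace Ω := MeasurableSpace.comap (fun ω => v (X ω)) inferInstance with hmVdef
  let mamb : MeasurableSpace Ω := m0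
  have hmXle : mX ≤ m0 := hX.comap_le
  have hmWle : mW ≤ m0 := hWm.comap_le
  have hVX : mV ≤ mX := by
    rw [hmVdef, hmXdef, show (fun ω => v (X ω)) = v ∘ X from rfl,
      ← MeasurableSpace.comap_comp]
    exact MeasurableSpace.comap_mono hv.comap_le
  have hprX : Measurable[mX] (fun ω => pr (X ω)) :=
    hprm.comp (comap_measurable X)
  have hprb : ∀ ω, |pr (X ω)| ≤ 1 := fun ω =>
    abs_le.mpr ⟨by linarith [(hpr (X ω)).1], (hpr (X ω)).2.le⟩
  have hCI := (condIndepFun_iff mX hmXle W A hWm hA P).mp hCE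
  have hA_ind : (Set.indicator (A ⁻¹' {1}) (fun _ => (1:ℝ))) = A := by
    funext ω
    rcases hA01 ω with h | h <;> simp [Set.indicator_apply, Set.mem_preimage, h]
  have hpt2 : P⟦A ⁻¹' {1} | mX⟧ =ᵐ[P] fun ω => pr (X ω) := by
    rw [hA_ind]; exact hprCE.symm
  -- main indicator identity
  have main_ind : ∀ s, MeasurableSet[mX] s → ∀ t, MeasurableSet[mW] t →
      ∫ ω in s, Set.indicator t (fun _ => (1:ℝ)) ω * A ω ∂P
        = ∫ ω in s, Set.indicator t (fun _ => (1:ℝ)) ω * pr (X ω) ∂P := by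
    intro s hs t ht
    have hsΩ : MeasurableSet[m0] s := hmXle s hs
    have htΩ : MeasurableSet[m0] t := hmWle t ht
    have ht2 : MeasurableSet[MeasurableSpace.comap A inferInstance] (A ⁻¹' {1}) :=
      ⟨{1}, measurableSet_singleton 1, rfl⟩
    have ht2Ω : MeasurableSet[m0] (A ⁻¹' {1}) := hA (measurableSet_singleton 1)
    have hind_int : Integrable (Set.indicator (t ∩ A ⁻¹' {1}) (fun _ => (1:ℝ))) P :=
      (integrable_const 1).indicator (htΩ.inter ht2Ω)
    have hIndEq : (fun ω => Set.indicator t (fun _ => (1:ℝ)) ω * A ω)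
        = Set.indicator (t ∩ A ⁻¹' {1}) (fun _ => (1:ℝ)) := by
      funext ω
      rcases hA01 ω with h | h <;> by_cases hωt : ω ∈ t <;>
        simp [Set.indicator_apply, hωt, h, Set.mem_preimage]
    have hcd := hCI t (A ⁻¹' {1}) ht ht2
    have hmul : P⟦t ∩ A ⁻¹' {1} | mX⟧ =ᵐ[P]
        fun ω => pr (X ω) * (P⟦t | mX⟧) ω := by
      filter_upwards [hcd, hpt2] with ω h1 h2
      rw [h1, Pi.mul_apply, h2, mul_comm]
    have h1 : ∫ ω in s, Set.indicator t (fun _ => (1:ℝ)) ω * A ω ∂P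
        = ∫ ω in s, pr (X ω) * (P⟦t | mX⟧) ω ∂P := by
      rw [hIndEq, ← setIntegral_condExp hmXle hind_int hs]
      exact setIntegral_congr_ae hsΩ (hmul.mono fun ω h _ => h)
    have hint1 : Integrable (Set.indicator t (fun _ => (1:ℝ))) P :=
      (integrable_const 1).indicator htΩ
    have hmulint : Integrable ((fun ω => pr (X ω)) * Set.indicator t (fun _ => (1:ℝ))) P := by
      refine hint1.abs.mono' (((hprm.comp hX).mul
        (measurable_const.indicator htΩ)).aestronglyMeasurable) ?_
      refine Eventually.of_forall fun ω => ?_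
      rw [Real.norm_eq_abs, Pi.mul_apply, abs_mul]
      calc |pr (X ω)| * |Set.indicator t (fun _ => (1:ℝ)) ω|
          ≤ 1 * |Set.indicator t (fun _ => (1:ℝ)) ω| :=
            mul_le_mul_of_nonneg_right (hprb ω) (abs_nonneg _)
        _ = |Set.indicator t (fun _ => (1:ℝ)) ω| := one_mul _
    have hmulcond := condExp_mul_of_stronglyMeasurable_left (μ := P)
      hprX.stronglyMeasurable hmulint hint1
    have h2 : ∫ ω in s, Set.indicator t (fun _ => (1:ℝ)) ω * pr (X ω) ∂P
        = ∫ ω in s, pr (X ω) * (P⟦t | mX⟧) ω ∂P := by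
      have e1 : ∫ ω in s, Set.indicator t (fun _ => (1:ℝ)) ω * pr (X ω) ∂P
          = ∫ ω in s, ((fun ω => pr (X ω)) * Set.indicator t (fun _ => (1:ℝ))) ω ∂P := by
        refine setIntegral_congr_ae hsΩ (Eventually.of_forall fun ω _ => ?_)
        simp [mul_comm]
      rw [e1, ← setIntegral_condExp hmXle hmulint hs]
      refine setIntegral_congr_ae hsΩ (hmulcond.mono fun ω h _ => ?_)
      rw [h, Pi.mul_apply]
    rw [h1, h2]
  -- key per-set identity for the actual integrands
  have key : ∀ s, MeasurableSet[mX] s →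
      ∫ ω in s, A ω * (Y1 ω - Y0 ω) ∂P = ∫ ω in s, pr (X ω) * (Y1 ω - Y0 ω) ∂P := by
    intro s hs
    have hsΩ : MeasurableSet[m0] s := hmXle s hs
    set FA : Ω → ℝ := Set.indicator s A with hFA
    set Fp : Ω → ℝ := Set.indicator s (fun ω => pr (X ω)) with hFp
    have hFAm : Measurable[m0] FA := hA.indicator hsΩ
    have hFpm : Measurable[m0] Fp := (hprm.comp hX).indicator hsΩ
    have hAb : ∀ ω, |A ω| ≤ 1 := fun ω => by
      rcases hA01 ω with h | h <;> simp [h]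
    have hFAb : ∀ ω, |FA ω| ≤ 1 := fun ω => by
      rw [hFA]; by_cases hω : ω ∈ s <;> simp [Set.indicator_apply, hω, hAb ω]
    have hFpb : ∀ ω, |Fp ω| ≤ 1 := fun ω => by
      rw [hFp]; by_cases hω : ω ∈ s <;> simp [Set.indicator_apply, hω, hprb ω]
    have hFAint : Integrable FA P :=
      (integrable_const (1:ℝ)).mono' hFAm.aestronglyMeasurable
        (Eventually.of_forall fun ω => by rw [Real.norm_eq_abs]; exact hFAb ω)
    have hFpint : Integrable Fp P :=
      (integrable_const (1:ℝ)).mono' hFpm.aestronglyMeasurable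
        (Eventually.of_forall fun ω => by rw [Real.norm_eq_abs]; exact hFpb ω)
    -- conditional expectations w.r.t. mW agree
    have hcond : P[FA | mW] =ᵐ[P] P[Fp | mW] := by
      refine ae_eq_condExp_of_forall_setIntegral_eq hmWle hFpint
        (fun t ht _ => integrable_condExp.integrableOn)
        (fun t ht _ => ?_) stronglyMeasurable_condExp.aestronglyMeasurable
      rw [setIntegral_condExp hmWle hFAint ht]
      have htΩ : MeasurableSet[m0] t := hmWle t ht
      have e1 : ∫ ω in t, FA ω ∂P
          = ∫ ω in s, Set.indicator t (fun _ => (1:ℝ)) ω * A ω ∂P := by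
        rw [hFA, setIntegral_indicator hsΩ]
        have : ∫ ω in s, Set.indicator t (fun _ => (1:ℝ)) ω * A ω ∂P
            = ∫ ω in s, Set.indicator t A ω ∂P := by
          refine setIntegral_congr_ae hsΩ (Eventually.of_forall fun ω _ => ?_)
          by_cases hω : ω ∈ t <;> simp [Set.indicator_apply, hω]
        rw [this, setIntegral_indicator htΩ, Set.inter_comm]
      have e2 : ∫ ω in t, Fp ω ∂P
          = ∫ ω in s, Set.indicator t (fun _ => (1:ℝ)) ω * pr (X ω) ∂P := by
        rw [hFp, setIntegral_indicator hsΩ]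
        have : ∫ ω in s, Set.indicator t (fun _ => (1:ℝ)) ω * pr (X ω) ∂P
            = ∫ ω in s, Set.indicator t (fun ω => pr (X ω)) ω ∂P := by
          refine setIntegral_congr_ae hsΩ (Eventually.of_forall fun ω _ => ?_)
          by_cases hω : ω ∈ t <;> simp [Set.indicator_apply, hω]
        rw [this, setIntegral_indicator htΩ, Set.inter_comm]
      rw [e1, e2]
      exact main_ind s hs t ht
    -- truncations
    set h : Ω → ℝ := fun ω => Y1 ω - Y0 ω with hhdef
    set g : ℕ → Ω → ℝ := fun n ω => max (-(n:ℝ)) (min (h ω) n) with hgdef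
    have habs : ∀ n ω, |g n ω| ≤ |h ω| := by
      intro n ω
      refine abs_le.mpr ⟨?_, ?_⟩
      · refine le_trans ?_ (le_max_right _ _)
        exact le_min (neg_abs_le _) ((neg_nonpos.mpr (abs_nonneg _)).trans (Nat.cast_nonneg n))
      · refine max_le ?_ (le_trans (min_le_left _ _) (le_abs_self _))
        exact le_trans (neg_nonpos.mpr (Nat.cast_nonneg n)) (abs_nonneg _)
    have hgb : ∀ n ω, |g n ω| ≤ (n : ℝ) := by
      intro n ω
      refine abs_le.mpr ⟨le_max_left _ _, max_le ?_ (min_le_right _ _)⟩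
      exact le_trans (neg_nonpos.mpr (Nat.cast_nonneg n)) (Nat.cast_nonneg n)
    have htend : ∀ ω, Tendsto (fun n => g n ω) atTop (nhds (h ω)) := by
      intro ω
      refine tendsto_atTop_of_eventually_const (i₀ := ⌈|h ω|⌉₊) fun n hn => ?_
      have hn' : |h ω| ≤ (n : ℝ) := le_trans (Nat.le_ceil _) (Nat.cast_le.mpr hn)
      rw [hgdef]
      simp only
      rw [min_eq_left (le_trans (le_abs_self _) hn'),
        max_eq_right (le_trans (neg_le_neg hn') (neg_abs_le _))]
    have hgmW : ∀ n, Measurable[mW] (g n) := by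
      intro n
      have : Measurable (fun p : ℝ × ℝ => max (-(n:ℝ)) (min (p.2 - p.1) n)) :=
        measurable_const.max ((measurable_snd.sub measurable_fst).min measurable_const)
      exact this.comp (comap_measurable W)
    have hgΩ : ∀ n, Measurable[m0] (g n) := fun n => (hgmW n).mono hmWle le_rfl
    have hhm : Measurable[m0] h := hY1.sub hY0
    -- per-n identity
    have hstep : ∀ (n : ℕ) (F : Ω → ℝ), Measurable[m0] F → Integrable F P →
        Integrable (g n * F) P →
        ∫ ω, (g n * F) ω ∂P = ∫ ω, g n ω * (P[F|mW]) ω ∂P := by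
      intro n F hFm hF hgF
      have h1 := condExp_mul_of_stronglyMeasurable_left (μ := P) (hgmW n).stronglyMeasurable hgF hF
      calc ∫ ω, (g n * F) ω ∂P = ∫ ω, (P[g n * F|mW]) ω ∂P :=
            (integral_condExp hmWle).symm
        _ = ∫ ω, g n ω * (P[F|mW]) ω ∂P := by
            refine integral_congr_ae (h1.mono fun ω hω => ?_)
            rw [hω, Pi.mul_apply]
    have hgFint : ∀ (n : ℕ) (F : Ω → ℝ), Measurable[m0] F → (∀ ω, |F ω| ≤ 1) →
        Integrable (g n * F) P := by
      intro n F hFm hFb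
      refine (integrable_const ((n : ℝ))).mono' ((hgΩ n).mul hFm).aestronglyMeasurable
        (Eventually.of_forall fun ω => ?_)
      rw [Pi.mul_apply, Real.norm_eq_abs, abs_mul]
      calc |g n ω| * |F ω| ≤ (n : ℝ) * 1 :=
            mul_le_mul (hgb n ω) (hFb ω) (abs_nonneg _) (Nat.cast_nonneg n)
        _ = (n : ℝ) := mul_one _
    have hgn : ∀ n, ∫ ω in s, A ω * g n ω ∂P = ∫ ω in s, pr (X ω) * g n ω ∂P := by
      intro n
      have eA : ∫ ω in s, A ω * g n ω ∂P = ∫ ω, (g n * FA) ω ∂P := by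
        rw [← integral_indicator hsΩ]
        refine integral_congr_ae (Eventually.of_forall fun ω => ?_)
        rw [hFA, Pi.mul_apply]
        by_cases hω : ω ∈ s <;> simp [Set.indicator_apply, hω, mul_comm]
      have ep : ∫ ω in s, pr (X ω) * g n ω ∂P = ∫ ω, (g n * Fp) ω ∂P := by
        rw [← integral_indicator hsΩ]
        refine integral_congr_ae (Eventually.of_forall fun ω => ?_)
        rw [hFp, Pi.mul_apply]
        by_cases hω : ω ∈ s <;> simp [Set.indicator_apply, hω, mul_comm]
      rw [eA, ep, hstep n FA hFAm hFAint (hgFint n FA hFAm hFAb),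
        hstep n Fp hFpm hFpint (hgFint n Fp hFpm hFpb)]
      refine integral_congr_ae (hcond.mono fun ω hω => ?_)
      show g n ω * (P[FA|mW]) ω = g n ω * (P[Fp|mW]) ω
      rw [hω]
    -- dominated convergence
    have hDCTA : Tendsto (fun n => ∫ ω in s, A ω * g n ω ∂P) atTop
        (nhds (∫ ω in s, A ω * h ω ∂P)) := by
      refine tendsto_integral_of_dominated_convergence (fun ω => |A ω * h ω|) ?_ ?_ ?_ ?_
      · exact fun n => ((hA.mul (hgΩ n))).aestronglyMeasurable.restrict
      · exact hI2.abs.restrict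
      · intro n
        refine Eventually.of_forall fun ω => ?_
        show ‖A ω * g n ω‖ ≤ |A ω * h ω|
        rw [Real.norm_eq_abs, abs_mul, abs_mul]
        exact mul_le_mul_of_nonneg_left (habs n ω) (abs_nonneg _)
      · exact Eventually.of_forall fun ω => (htend ω).const_mul _
    have hDCTp : Tendsto (fun n => ∫ ω in s, pr (X ω) * g n ω ∂P) atTop
        (nhds (∫ ω in s, pr (X ω) * h ω ∂P)) := by
      refine tendsto_integral_of_dominated_convergence (fun ω => |pr (X ω) * h ω|) ?_ ?_ ?_ ?_
      · exact fun n => (((hprm.comp hX).mul (hgΩ n))).aestronglyMeasurable.restrict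
      · exact hI1.abs.restrict
      · intro n
        refine Eventually.of_forall fun ω => ?_
        show ‖pr (X ω) * g n ω‖ ≤ |pr (X ω) * h ω|
        rw [Real.norm_eq_abs, abs_mul, abs_mul]
        exact mul_le_mul_of_nonneg_left (habs n ω) (abs_nonneg _)
      · exact Eventually.of_forall fun ω => (htend ω).const_mul _
    exact tendsto_nhds_unique hDCTA ((funext hgn : _ = _) ▸ hDCTp)
  -- conclude at mX level
  have hmain : P[(fun ω => pr (X ω) * (Y1 ω - Y0 ω)) | mX]
      =ᵐ[P] P[(fun ω => A ω * (Y1 ω - Y0 ω)) | mX] := by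
    refine ae_eq_condExp_of_forall_setIntegral_eq hmXle hI2
      (fun s hs _ => integrable_condExp.integrableOn)
      (fun s hs _ => ?_) stronglyMeasurable_condExp.aestronglyMeasurable
    rw [setIntegral_condExp hmXle hI1 hs]
    exact (key s hs).symm
  calc P[(fun ω => pr (X ω) * (Y1 ω - Y0 ω)) | mV]
      =ᵐ[P] P[P[(fun ω => pr (X ω) * (Y1 ω - Y0 ω)) | mX] | mV] :=
        (condExp_condExp_of_le hVX hmXle).symm
    _ =ᵐ[P] P[P[(fun ω => A ω * (Y1 ω - Y0 ω)) | mX] | mV] := condExp_congr_ae hmain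
    _ =ᵐ[P] P[(fun ω => A ω * (Y1 ω - Y0 ω)) | mV] := condExp_condExp_of_le hVX hmXle
end

section
/- Oracle error bound (Theorem 1). Let g*, ĝ : 𝒱 → ℝ be measurable, let η₀ := (π, Q⁰, Q¹) be the true nuisance parameters, and let η̂ := (π̂, Q̂⁰, Q̂¹) be measurable functions 𝒳 → ℝ with 0 < π̂(x) < 1 for all x. For a nuisance triple η = (p, q⁰, q¹) write w_η := (A − p(X))·λ'(p(X)) + λ(p(X)), φ_η := (λ(p(X))/w_η)·[(A/p(X))·(Y − q¹(X)) − ((1−A)/(1−p(X)))·(Y − q⁰(X))] + q¹(X) − q⁰(X), L(g, η) := E[w_η·(φ_η − g(V))²], η_t := η₀ + t·(η̂ − η₀) componentwise, and ‖h‖² := E[h(V)²]. Define the random variables c₁(η) := λ(p(X))·[(A/p(X)³)(Y−q¹(X)) − ((1−A)/(1−p(X))³)(Y−q⁰(X))] − λ'(p(X))·[(A/p(X)²)(Y−q¹(X)) + ((1−A)/(1−p(X))²)(Y−q⁰(X))] + ½λ''(p(X))·[(A/p(X))(Y−q¹(X)) − ((1−A)/(1−p(X)))(Y−q⁰(X))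 − q¹(X) + q⁰(X) + g*(V)] + ½λ'''(p(X))·(A−p(X))·(q¹(X)−q⁰(X)−g*(V)); c₂(η) := λ(p(X))·A/p(X)² − λ'(p(X))·A/p(X) + (A−p(X))·λ''(p(X)); c₃(η) := λ(p(X))·(1−A)/(1−p(X))² + λ'(p(X))·(1−A)/(1−p(X)) − (A−p(X))·λ''(p(X)). Assume: (a) w_{η̂} ≠ 0 a.s. and w_{η₀} ≠ 0 a.s. and all expectations appearing below are finite; (b) first-order optimality of g*: F(0) ≤ 0, where F(t) := E[(λ(π_t(X))·[(A/π_t(X))(Y−Q¹_t(X)) − ((1−A)/(1−π_t(X)))(Y−Q⁰_t(X))] + w_{η_t}·(Q¹_t(X)−Q⁰_t(X)−g*(V)))·(ĝ(V)−g*(V))] and (π_t, Q⁰_t, Q¹_t) := η_t (so that −2F(t) is the directional derivative of L(·, η_t) at g* in the direction ĝ − g*); (c) there is α ≥ 0 with E[w_{η̂}·(ĝ(V)−g*(V))²] ≥ (α/2)·‖ĝ−g*‖²; (d) F is continuous on [0,1], differentiable on [0,1) with F'(0) = 0, twice differentiable on (0,1), and for every t ∈ (0,1), F''(t) = 2·E[c₁(η_t)·(π̂(X)−π(X))²·(ĝ(V)−g*(V))]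 + 2·E[c₂(η_t)·(π̂(X)−π(X))·(Q̂¹(X)−Q¹(X))·(ĝ(V)−g*(V))] + 2·E[c₃(η_t)·(π̂(X)−π(X))·(Q̂⁰(X)−Q⁰(X))·(ĝ(V)−g*(V))] (differentiation under the integral sign). Then for all δ₁, δ₂, δ₃ > 0 with δ₁ + δ₂ + δ₃ < α/2, there exists t̄ ∈ (0,1) such that, with R_g := L(ĝ, η̂) − L(g*, η̂), ‖ĝ − g*‖² ≤ (α/2 − δ₁ − δ₂ − δ₃)⁻¹·( R_g + (1/δ₁)·E[c₁(η_{t̄})²·(π̂(X)−π(X))⁴] + (1/δ₂)·E[c₂(η_{t̄})²·(π̂(X)−π(X))²·(Q̂¹(X)−Q¹(X))²] + (1/δ₃)·E[c₃(η_{t̄})²·(π̂(X)−π(X))²·(Q̂⁰(X)−Q⁰(X))²] ). -/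
open MeasureTheory ProbabilityTheory

/-- The componentwise nuisance path `f + t·(g − f)`. -/
noncomputable def pathFun {𝓧 : Type*} (f g : 𝓧 → ℝ) (t : ℝ) : 𝓧 → ℝ :=
  fun x => f x + t * (g x - f x)

/-- The random variable `c₁(η)` of Theorem 1. -/
noncomputable def c1Fun {Ω 𝓧 𝓥 : Type*} (lam lam' lam'' lam''' : ℝ → ℝ) (A Y : Ω → ℝ)
    (X : Ω → 𝓧) (v : 𝓧 → 𝓥) (gstar : 𝓥 → ℝ) (p q0 q1 : 𝓧 → ℝ) (ω : Ω) : ℝ :=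
  lam (p (X ω)) * (A ω / p (X ω) ^ 3 * (Y ω - q1 (X ω))
      - (1 - A ω) / (1 - p (X ω)) ^ 3 * (Y ω - q0 (X ω)))
    - lam' (p (X ω)) * (A ω / p (X ω) ^ 2 * (Y ω - q1 (X ω))
      + (1 - A ω) / (1 - p (X ω)) ^ 2 * (Y ω - q0 (X ω)))
    + 1 / 2 * lam'' (p (X ω)) * (A ω / p (X ω) * (Y ω - q1 (X ω))
      - (1 - A ω) / (1 - p (X ω)) * (Y ω - q0 (X ω))
      - q1 (X ω) + q0 (X ω) + gstar (v (X ω)))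
    + 1 / 2 * lam''' (p (X ω)) * (A ω - p (X ω)) * (q1 (X ω) - q0 (X ω) - gstar (v (X ω)))

/-- The random variable `c₂(η)` of Theorem 1. -/
noncomputable def c2Fun {Ω 𝓧 : Type*} (lam lam' lam'' : ℝ → ℝ) (A : Ω → ℝ)
    (X : Ω → 𝓧) (p : 𝓧 → ℝ) (ω : Ω) : ℝ :=
  lam (p (X ω)) * A ω / p (X ω) ^ 2 - lam' (p (X ω)) * A ω / p (X ω)
    + (A ω - p (X ω)) * lam'' (p (X ω))

/-- The random variable `c₃(η)` of Theorem 1. -/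
noncomputable def c3Fun {Ω 𝓧 : Type*} (lam lam' lam'' : ℝ → ℝ) (A : Ω → ℝ)
    (X : Ω → 𝓧) (p : 𝓧 → ℝ) (ω : Ω) : ℝ :=
  lam (p (X ω)) * (1 - A ω) / (1 - p (X ω)) ^ 2 + lam' (p (X ω)) * (1 - A ω) / (1 - p (X ω))
    - (A ω - p (X ω)) * lam'' (p (X ω))

section AuxLemmas
open Set Filter Topology

lemma young_pt (δ a b : ℝ) (hδ : 0 < δ) : 2 * (a * b) ≤ 1 / δ * a ^ 2 + δ * b ^ 2 := by
  have h2 : δ * (1 / δ * a ^ 2 + δ * b ^ 2) = a ^ 2 + δ ^ 2 * b ^ 2 := by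
    field_simp
  have key : δ * (2 * (a * b)) ≤ δ * (1 / δ * a ^ 2 + δ * b ^ 2) := by
    rw [h2]; nlinarith [sq_nonneg (a - δ * b)]
  exact le_of_mul_le_mul_left key hδ

lemma young_integral {Ω : Type*} [MeasurableSpace Ω] {P : Measure Ω} {δ : ℝ} (hδ : 0 < δ)
    {f g h : Ω → ℝ} (hI : Integrable h P) (hf : Integrable f P) (hg : Integrable g P)
    (hpt : ∀ ω, 2 * h ω ≤ 1 / δ * f ω + δ * g ω) :
    2 * ∫ ω, h ω ∂P ≤ 1 / δ * ∫ ω, f ω ∂P + δ * ∫ ω, g ω ∂P := by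
  rw [← integral_const_mul, ← integral_const_mul, ← integral_const_mul,
    ← integral_add (hf.const_mul _) (hg.const_mul _)]
  exact integral_mono (hI.const_mul 2) ((hf.const_mul _).add (hg.const_mul _)) hpt

/-- One-sided Taylor-type bound: continuity on `[0,1]`, right derivative `F'` on `[0,1)`,
and two-sided second derivative `F''` of `F'` on `(0,1)` give a point `t ∈ (0,1)` with
`F 1 - F 0 - F' 0 ≤ (1/2) * F'' t`. -/
lemma taylor_like (F F' F'' : ℝ → ℝ)
    (hFcont : ContinuousOn F (Set.Icc 0 1))
    (hF' : ∀ t ∈ Set.Ico (0:ℝ) 1, HasDerivWithinAt F (F' t) (Set.Ici t) t)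
    (hF'' : ∀ t ∈ Set.Ioo (0:ℝ) 1, HasDerivAt F' (F'' t) t) :
    ∃ t ∈ Set.Ioo (0:ℝ) 1, F 1 - F 0 - F' 0 ≤ (1/2) * F'' t := by
  have hF'cont : ContinuousOn F' (Set.Ioo 0 1) := fun x hx =>
    (hF'' x hx).differentiableAt.continuousAt.continuousWithinAt
  -- Step A : two-sided derivative of F on (0,1)
  have hA : ∀ t ∈ Set.Ioo (0:ℝ) 1, HasDerivAt F (F' t) t := by
    intro t ht
    obtain ⟨ht0, ht1⟩ := ht
    set s := t / 2 with hs
    set u := (t + 1) / 2 with hu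
    have hs0 : 0 < s := by positivity
    have hst : s < t := by rw [hs]; linarith
    have htu : t < u := by rw [hu]; linarith
    have hu1 : u < 1 := by rw [hu]; linarith
    have hsub : Set.Icc s u ⊆ Set.Ioo 0 1 := fun x hx =>
      ⟨lt_of_lt_of_le hs0 hx.1, lt_of_le_of_lt hx.2 hu1⟩
    have hG : ∀ r ∈ Set.Icc s u,
        HasDerivAt (fun r => F s + ∫ x in s..r, F' x) (F' r) r := by
      intro r hr
      have hr' : r ∈ Set.Ioo (0:ℝ) 1 := hsub hr
      have hint : IntervalIntegrable F' MeasureTheory.volume s r := by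
        apply ContinuousOn.intervalIntegrable
        rw [Set.uIcc_of_le hr.1]
        exact hF'cont.mono fun x hx => hsub ⟨hx.1, le_trans hx.2 hr.2⟩
      have hmeas : StronglyMeasurableAtFilter F' (𝓝 r) MeasureTheory.volume :=
        hF'cont.stronglyMeasurableAtFilter isOpen_Ioo r hr'
      exact (intervalIntegral.integral_hasDerivAt_right hint hmeas
        (hF'' r hr').differentiableAt.continuousAt).const_add (F s)
    have heq := eq_of_has_deriv_right_eq (a := s) (b := u) (f' := F') (f := F)
      (g := fun r => F s + ∫ x in s..r, F' x)
      (fun x hx => hF' x ⟨le_of_lt (lt_of_lt_of_le hs0 hx.1),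
        lt_of_lt_of_le hx.2 (le_of_lt hu1)⟩)
      (fun x hx => (hG x ⟨hx.1, le_of_lt hx.2⟩).hasDerivWithinAt)
      (hFcont.mono fun x hx => ⟨le_of_lt (lt_of_lt_of_le hs0 hx.1),
        le_of_lt (lt_of_le_of_lt hx.2 hu1)⟩)
      (fun x hx => (hG x hx).differentiableAt.continuousAt.continuousWithinAt)
      (by simp)
    have hev : (fun r => F s + ∫ x in s..r, F' x) =ᶠ[𝓝 t] F := by
      filter_upwards [Ioo_mem_nhds hst htu] with r hr
      exact (heq r ⟨le_of_lt hr.1, le_of_lt hr.2⟩).symm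
    exact (hG t ⟨le_of_lt hst, le_of_lt htu⟩).congr_of_eventuallyEq hev.symm
  -- Step B : contradiction argument
  by_contra hcon
  push_neg at hcon
  set K := F 1 - F 0 - F' 0 with hK
  set g : ℝ → ℝ := fun t => F t - F 0 - F' 0 * t - K * t ^ 2 with hg
  set g' : ℝ → ℝ := fun t => F' t - F' 0 - 2 * K * t with hg'
  have hg0 : g 0 = 0 := by simp [hg]
  have hg1 : g 1 = 0 := by simp [hg, hK]
  have hgderiv : ∀ t ∈ Set.Ioo (0:ℝ) 1, HasDerivAt g (g' t) t := by
    intro t ht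
    have h := (((hA t ht).sub_const (F 0)).sub
      ((hasDerivAt_id t).const_mul (F' 0))).sub ((hasDerivAt_pow 2 t).const_mul K)
    simp only [hg']
    refine h.congr_deriv ?_
    ring
  have hgcont : ContinuousOn g (Set.Icc 0 1) := by
    apply ContinuousOn.sub
    apply ContinuousOn.sub
    apply ContinuousOn.sub hFcont continuousOn_const
    · exact (continuous_const.mul continuous_id).continuousOn
    · exact (continuous_const.mul (continuous_pow 2)).continuousOn
  have hg'deriv : ∀ t ∈ Set.Ioo (0:ℝ) 1, HasDerivAt g' (F'' t - 2 * K) t := by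
    intro t ht
    have h := ((hF'' t ht).sub_const (F' 0)).sub ((hasDerivAt_id t).const_mul (2 * K))
    refine h.congr_deriv ?_
    ring
  have hg'anti : StrictAntiOn g' (Set.Ioo 0 1) := by
    apply strictAntiOn_of_deriv_neg (convex_Ioo 0 1)
      (fun x hx => (hg'deriv x hx).differentiableAt.continuousAt.continuousWithinAt)
    intro x hx
    rw [interior_Ioo] at hx
    rw [(hg'deriv x hx).deriv]
    have := hcon x hx
    linarith
  have h1 : ∃ d ∈ Set.Ioo (0:ℝ) (1/2), g' d = (g (1/2) - g 0) / (1/2 - 0) :=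
    exists_hasDerivAt_eq_slope g g' (by norm_num)
      (hgcont.mono (Set.Icc_subset_Icc le_rfl (by norm_num)))
      (fun x hx => hgderiv x ⟨hx.1, by linarith [hx.2]⟩)
  have h2 : ∃ c ∈ Set.Ioo (1/2 : ℝ) 1, g' c = (g 1 - g (1/2)) / (1 - 1/2) :=
    exists_hasDerivAt_eq_slope g g' (by norm_num)
      (hgcont.mono (Set.Icc_subset_Icc (by norm_num) le_rfl))
      (fun x hx => hgderiv x ⟨by linarith [hx.1], hx.2⟩)
  obtain ⟨d, hd, hgd⟩ := h1
  obtain ⟨c, hc, hgc⟩ := h2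
  have hd' : d ∈ Set.Ioo (0:ℝ) 1 := ⟨hd.1, by linarith [hd.2]⟩
  have hc' : c ∈ Set.Ioo (0:ℝ) 1 := ⟨by linarith [hc.1], hc.2⟩
  have hgd2 : g' d = 2 * g (1/2) := by rw [hgd, hg0]; ring
  have hgc2 : g' c = -(2 * g (1/2)) := by rw [hgc, hg1]; ring
  have hdc : g' c < g' d := hg'anti hd' hc' (by linarith [hd.2, hc.1])
  have hgdpos : 0 < g' d := by rw [hgd2]; rw [hgd2, hgc2] at hdc; linarith
  -- right derivative of g at 0 is 0
  have hgright : HasDerivWithinAt g 0 (Set.Ici 0) 0 := by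
    have h := (((hF' 0 ⟨le_rfl, by norm_num⟩).sub_const (F 0)).sub
      (((hasDerivAt_id (0:ℝ)).const_mul (F' 0)).hasDerivWithinAt)).sub
      (((hasDerivAt_pow 2 (0:ℝ)).const_mul K).hasDerivWithinAt)
    refine h.congr_deriv ?_
    simp
  rw [hasDerivWithinAt_iff_tendsto_slope, Set.Ici_sdiff_left] at hgright
  have hev : ∀ᶠ x in 𝓝[>] (0:ℝ), g' d ≤ slope g 0 x := by
    have hmem : Set.Ioo (0:ℝ) d ∈ 𝓝[>] (0:ℝ) := Ioo_mem_nhdsGT_of_mem ⟨le_rfl, hd.1⟩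
    filter_upwards [hmem] with x hx
    obtain ⟨e, he, hge⟩ := exists_hasDerivAt_eq_slope g g' hx.1
      (hgcont.mono (Set.Icc_subset_Icc le_rfl (by linarith [hx.2, hd.2])))
      (fun y hy => hgderiv y ⟨hy.1, by linarith [hy.2, hx.2, hd.2]⟩)
    have heD : g' d < g' e := hg'anti ⟨he.1, by linarith [he.2, hx.2, hd.2]⟩ hd'
      (by linarith [he.2, hx.2])
    rw [slope_def_field]
    rw [hg0] at hge
    calc g' d ≤ g' e := le_of_lt heD
      _ = (g x - 0) / (x - 0) := hge
      _ = (g x - g 0) / (x - 0) := by rw [hg0]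
  have : g' d ≤ 0 := ge_of_tendsto hgright hev
  linarith

end AuxLemmas

/-- Theorem 1: oracle error bound for the Neyman-orthogonal weighted
learner.  Under first-order optimality of `g*`, strong convexity (`α`-curvature) of the
weighted risk at the estimated nuisance parameters, and differentiability (under the
integral sign) of the risk-gradient along the nuisance path, the squared `L²(V)`-distance
between `ĝ` and `g*` is bounded by the excess risk plus higher-order products of
nuisance-estimation errors. -/
theorem stmt19 {Ω 𝓧 𝓥 : Type*} [MeasurableSpace Ω] [StandardBorelSpace Ω]
    [MeasurableSpace 𝓧] [MeasurableSpace 𝓥]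
    (P : Measure Ω) [IsProbabilityMeasure P]
    (X : Ω → 𝓧) (hX : Measurable X) (v : 𝓧 → 𝓥) (hv : Measurable v)
    (A Y0 Y1 Y : Ω → ℝ) (hA : Measurable A) (hY0 : Measurable Y0) (hY1 : Measurable Y1)
    (hA01 : ∀ ω, A ω = 0 ∨ A ω = 1)
    (hYdef : ∀ ω, Y ω = A ω * Y1 ω + (1 - A ω) * Y0 ω)
    (pr : 𝓧 → ℝ) (hprm : Measurable pr) (hpr : ∀ x, 0 < pr x ∧ pr x < 1)
    (hprCE : (fun ω => pr (X ω)) =ᵐ[P] P[A | MeasurableSpace.comap X inferInstance])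
    (hCE : CondIndepFun (MeasurableSpace.comap X inferInstance) hX.comap_le
      (fun ω => (Y0 ω, Y1 ω)) A P)
    (Q0 Q1 : 𝓧 → ℝ) (hQ0m : Measurable Q0) (hQ1m : Measurable Q1)
    (hQ1 : P[fun ω => A ω * (Y ω - Q1 (X ω)) | MeasurableSpace.comap X inferInstance]
      =ᵐ[P] fun _ => (0 : ℝ))
    (hQ0 : P[fun ω => (1 - A ω) * (Y ω - Q0 (X ω)) | MeasurableSpace.comap X inferInstance]
      =ᵐ[P] fun _ => (0 : ℝ))
    -- λ is three times continuously differentiable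
    (lam lam' lam'' lam''' : ℝ → ℝ)
    (hlam : ∀ p, HasDerivAt lam (lam' p) p)
    (hlam' : ∀ p, HasDerivAt lam' (lam'' p) p)
    (hlam'' : ∀ p, HasDerivAt lam'' (lam''' p) p)
    (hlam''' : Continuous lam''')
    -- target parameters and estimated nuisance parameters
    (gstar ghat : 𝓥 → ℝ) (hgstar : Measurable gstar) (hghat : Measurable ghat)
    (prHat Q0Hat Q1Hat : 𝓧 → ℝ)
    (hprHatm : Measurable prHat) (hQ0Hatm : Measurable Q0Hat) (hQ1Hatm : Measurable Q1Hat)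
    (hprHat : ∀ x, 0 < prHat x ∧ prHat x < 1)
    -- (a) nondegenerate weights and integrability
    (hwhat : ∀ᵐ ω ∂P, wFun lam lam' A X prHat ω ≠ 0)
    (hw0 : ∀ᵐ ω ∂P, wFun lam lam' A X pr ω ≠ 0)
    (hIrisk1 : Integrable (fun ω => wFun lam lam' A X prHat ω *
      (phiFun lam lam' A Y X prHat Q0Hat Q1Hat ω - ghat (v (X ω))) ^ 2) P)
    (hIrisk2 : Integrable (fun ω => wFun lam lam' A X prHat ω *
      (phiFun lam lam' A Y X prHat Q0Hat Q1Hat ω - gstar (v (X ω))) ^ 2) P)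
    (hInorm : Integrable (fun ω => (ghat (v (X ω)) - gstar (v (X ω))) ^ 2) P)
    (hIcurv : Integrable (fun ω => wFun lam lam' A X prHat ω *
      (ghat (v (X ω)) - gstar (v (X ω))) ^ 2) P)
    (hIC1 : ∀ t ∈ Set.Icc (0 : ℝ) 1, Integrable (fun ω =>
      (c1Fun lam lam' lam'' lam''' A Y X v gstar
          (pathFun pr prHat t) (pathFun Q0 Q0Hat t) (pathFun Q1 Q1Hat t) ω) ^ 2
        * (prHat (X ω) - pr (X ω)) ^ 4) P)
    (hIC2 : ∀ t ∈ Set.Icc (0 : ℝ) 1, Integrable (fun ω =>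
      (c2Fun lam lam' lam'' A X (pathFun pr prHat t) ω) ^ 2
        * (prHat (X ω) - pr (X ω)) ^ 2 * (Q1Hat (X ω) - Q1 (X ω)) ^ 2) P)
    (hIC3 : ∀ t ∈ Set.Icc (0 : ℝ) 1, Integrable (fun ω =>
      (c3Fun lam lam' lam'' A X (pathFun pr prHat t) ω) ^ 2
        * (prHat (X ω) - pr (X ω)) ^ 2 * (Q0Hat (X ω) - Q0 (X ω)) ^ 2) P)
    (hID1 : ∀ t ∈ Set.Icc (0 : ℝ) 1, Integrable (fun ω =>
      c1Fun lam lam' lam'' lam''' A Y X v gstar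
          (pathFun pr prHat t) (pathFun Q0 Q0Hat t) (pathFun Q1 Q1Hat t) ω
        * (prHat (X ω) - pr (X ω)) ^ 2 * (ghat (v (X ω)) - gstar (v (X ω)))) P)
    (hID2 : ∀ t ∈ Set.Icc (0 : ℝ) 1, Integrable (fun ω =>
      c2Fun lam lam' lam'' A X (pathFun pr prHat t) ω
        * (prHat (X ω) - pr (X ω)) * (Q1Hat (X ω) - Q1 (X ω))
        * (ghat (v (X ω)) - gstar (v (X ω)))) P)
    (hID3 : ∀ t ∈ Set.Icc (0 : ℝ) 1, Integrable (fun ω =>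
      c3Fun lam lam' lam'' A X (pathFun pr prHat t) ω
        * (prHat (X ω) - pr (X ω)) * (Q0Hat (X ω) - Q0 (X ω))
        * (ghat (v (X ω)) - gstar (v (X ω)))) P)
    -- the (−1/2 times) directional derivative of the risk in `g` along the nuisance path
    (F F' : ℝ → ℝ)
    (hFdef : ∀ t : ℝ, F t = ∫ ω,
      (lam (pathFun pr prHat t (X ω)) *
          (A ω / pathFun pr prHat t (X ω) * (Y ω - pathFun Q1 Q1Hat t (X ω))
            - (1 - A ω) / (1 - pathFun pr prHat t (X ω)) * (Y ω - pathFun Q0 Q0Hat t (X ω)))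
        + wFun lam lam' A X (pathFun pr prHat t) ω *
          (pathFun Q1 Q1Hat t (X ω) - pathFun Q0 Q0Hat t (X ω) - gstar (v (X ω))))
        * (ghat (v (X ω)) - gstar (v (X ω))) ∂P)
    -- (b) first-order optimality of g* at the true nuisance parameters
    (hF0 : F 0 ≤ 0)
    -- (c) curvature
    (α : ℝ) (hα : 0 ≤ α)
    (hcurv : α / 2 * ∫ ω, (ghat (v (X ω)) - gstar (v (X ω))) ^ 2 ∂P
      ≤ ∫ ω, wFun lam lam' A X prHat ω * (ghat (v (X ω)) - gstar (v (X ω))) ^ 2 ∂P)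
    -- (d) smoothness of F with F'(0) = 0 and second derivative given by
    -- differentiation under the integral sign
    (hFcont : ContinuousOn F (Set.Icc 0 1))
    (hF' : ∀ t ∈ Set.Ico (0 : ℝ) 1, HasDerivWithinAt F (F' t) (Set.Ici t) t)
    (hF'0 : F' 0 = 0)
    (hF'' : ∀ t ∈ Set.Ioo (0 : ℝ) 1, HasDerivAt F'
      (2 * ∫ ω, c1Fun lam lam' lam'' lam''' A Y X v gstar
            (pathFun pr prHat t) (pathFun Q0 Q0Hat t) (pathFun Q1 Q1Hat t) ω
          * (prHat (X ω) - pr (X ω)) ^ 2 * (ghat (v (X ω)) - gstar (v (X ω))) ∂P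
        + 2 * ∫ ω, c2Fun lam lam' lam'' A X (pathFun pr prHat t) ω
          * (prHat (X ω) - pr (X ω)) * (Q1Hat (X ω) - Q1 (X ω))
          * (ghat (v (X ω)) - gstar (v (X ω))) ∂P
        + 2 * ∫ ω, c3Fun lam lam' lam'' A X (pathFun pr prHat t) ω
          * (prHat (X ω) - pr (X ω)) * (Q0Hat (X ω) - Q0 (X ω))
          * (ghat (v (X ω)) - gstar (v (X ω))) ∂P) t) :
    ∀ δ₁ δ₂ δ₃ : ℝ, 0 < δ₁ → 0 < δ₂ → 0 < δ₃ → δ₁ + δ₂ + δ₃ < α / 2 →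
    ∃ tbar ∈ Set.Ioo (0 : ℝ) 1,
      ∫ ω, (ghat (v (X ω)) - gstar (v (X ω))) ^ 2 ∂P
        ≤ (α / 2 - δ₁ - δ₂ - δ₃)⁻¹ *
          ((∫ ω, wFun lam lam' A X prHat ω *
              (phiFun lam lam' A Y X prHat Q0Hat Q1Hat ω - ghat (v (X ω))) ^ 2 ∂P
            - ∫ ω, wFun lam lam' A X prHat ω *
              (phiFun lam lam' A Y X prHat Q0Hat Q1Hat ω - gstar (v (X ω))) ^ 2 ∂P)
          + (1 / δ₁) * ∫ ω,
              (c1Fun lam lam' lam'' lam''' A Y X v gstar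
                  (pathFun pr prHat tbar) (pathFun Q0 Q0Hat tbar) (pathFun Q1 Q1Hat tbar) ω) ^ 2
                * (prHat (X ω) - pr (X ω)) ^ 4 ∂P
          + (1 / δ₂) * ∫ ω,
              (c2Fun lam lam' lam'' A X (pathFun pr prHat tbar) ω) ^ 2
                * (prHat (X ω) - pr (X ω)) ^ 2 * (Q1Hat (X ω) - Q1 (X ω)) ^ 2 ∂P
          + (1 / δ₃) * ∫ ω,
              (c3Fun lam lam' lam'' A X (pathFun pr prHat tbar) ω) ^ 2
                * (prHat (X ω) - pr (X ω)) ^ 2 * (Q0Hat (X ω) - Q0 (X ω)) ^ 2 ∂P) := by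
  intro δ₁ δ₂ δ₃ hδ₁ hδ₂ hδ₃ hδsum
  obtain ⟨tbar, htbar, hTay⟩ := taylor_like F F'
    (fun t => 2 * ∫ ω, c1Fun lam lam' lam'' lam''' A Y X v gstar
            (pathFun pr prHat t) (pathFun Q0 Q0Hat t) (pathFun Q1 Q1Hat t) ω
          * (prHat (X ω) - pr (X ω)) ^ 2 * (ghat (v (X ω)) - gstar (v (X ω))) ∂P
        + 2 * ∫ ω, c2Fun lam lam' lam'' A X (pathFun pr prHat t) ω
          * (prHat (X ω) - pr (X ω)) * (Q1Hat (X ω) - Q1 (X ω))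
          * (ghat (v (X ω)) - gstar (v (X ω))) ∂P
        + 2 * ∫ ω, c3Fun lam lam' lam'' A X (pathFun pr prHat t) ω
          * (prHat (X ω) - pr (X ω)) * (Q0Hat (X ω) - Q0 (X ω))
          * (ghat (v (X ω)) - gstar (v (X ω))) ∂P)
    hFcont hF' hF''
  refine ⟨tbar, htbar, ?_⟩
  have htIcc : tbar ∈ Set.Icc (0:ℝ) 1 := ⟨le_of_lt htbar.1, le_of_lt htbar.2⟩
  -- Young-type bounds on the three cross terms
  have hY1 : 2 * (∫ ω, c1Fun lam lam' lam'' lam''' A Y X v gstar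
          (pathFun pr prHat tbar) (pathFun Q0 Q0Hat tbar) (pathFun Q1 Q1Hat tbar) ω
        * (prHat (X ω) - pr (X ω)) ^ 2 * (ghat (v (X ω)) - gstar (v (X ω))) ∂P)
      ≤ 1 / δ₁ * (∫ ω, (c1Fun lam lam' lam'' lam''' A Y X v gstar
          (pathFun pr prHat tbar) (pathFun Q0 Q0Hat tbar) (pathFun Q1 Q1Hat tbar) ω) ^ 2
        * (prHat (X ω) - pr (X ω)) ^ 4 ∂P)
        + δ₁ * ∫ ω, (ghat (v (X ω)) - gstar (v (X ω))) ^ 2 ∂P := by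
    apply young_integral hδ₁ (hID1 tbar htIcc) (hIC1 tbar htIcc) hInorm
    intro ω
    have h := young_pt δ₁ (c1Fun lam lam' lam'' lam''' A Y X v gstar
          (pathFun pr prHat tbar) (pathFun Q0 Q0Hat tbar) (pathFun Q1 Q1Hat tbar) ω
        * (prHat (X ω) - pr (X ω)) ^ 2) (ghat (v (X ω)) - gstar (v (X ω))) hδ₁
    have h2 : (c1Fun lam lam' lam'' lam''' A Y X v gstar
          (pathFun pr prHat tbar) (pathFun Q0 Q0Hat tbar) (pathFun Q1 Q1Hat tbar) ω
        * (prHat (X ω) - pr (X ω)) ^ 2) ^ 2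
        = (c1Fun lam lam' lam'' lam''' A Y X v gstar
          (pathFun pr prHat tbar) (pathFun Q0 Q0Hat tbar) (pathFun Q1 Q1Hat tbar) ω) ^ 2
        * (prHat (X ω) - pr (X ω)) ^ 4 := by ring
    linarith
  have hY2 : 2 * (∫ ω, c2Fun lam lam' lam'' A X (pathFun pr prHat tbar) ω
        * (prHat (X ω) - pr (X ω)) * (Q1Hat (X ω) - Q1 (X ω))
        * (ghat (v (X ω)) - gstar (v (X ω))) ∂P)
      ≤ 1 / δ₂ * (∫ ω, (c2Fun lam lam' lam'' A X (pathFun pr prHat tbar) ω) ^ 2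
        * (prHat (X ω) - pr (X ω)) ^ 2 * (Q1Hat (X ω) - Q1 (X ω)) ^ 2 ∂P)
        + δ₂ * ∫ ω, (ghat (v (X ω)) - gstar (v (X ω))) ^ 2 ∂P := by
    apply young_integral hδ₂ (hID2 tbar htIcc) (hIC2 tbar htIcc) hInorm
    intro ω
    have h := young_pt δ₂ (c2Fun lam lam' lam'' A X (pathFun pr prHat tbar) ω
        * (prHat (X ω) - pr (X ω)) * (Q1Hat (X ω) - Q1 (X ω)))
      (ghat (v (X ω)) - gstar (v (X ω))) hδ₂
    have h2 : (c2Fun lam lam' lam'' A X (pathFun pr prHat tbar) ω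
        * (prHat (X ω) - pr (X ω)) * (Q1Hat (X ω) - Q1 (X ω))) ^ 2
        = (c2Fun lam lam' lam'' A X (pathFun pr prHat tbar) ω) ^ 2
        * (prHat (X ω) - pr (X ω)) ^ 2 * (Q1Hat (X ω) - Q1 (X ω)) ^ 2 := by ring
    linarith
  have hY3 : 2 * (∫ ω, c3Fun lam lam' lam'' A X (pathFun pr prHat tbar) ω
        * (prHat (X ω) - pr (X ω)) * (Q0Hat (X ω) - Q0 (X ω))
        * (ghat (v (X ω)) - gstar (v (X ω))) ∂P)
      ≤ 1 / δ₃ * (∫ ω, (c3Fun lam lam' lam'' A X (pathFun pr prHat tbar) ω) ^ 2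
        * (prHat (X ω) - pr (X ω)) ^ 2 * (Q0Hat (X ω) - Q0 (X ω)) ^ 2 ∂P)
        + δ₃ * ∫ ω, (ghat (v (X ω)) - gstar (v (X ω))) ^ 2 ∂P := by
    apply young_integral hδ₃ (hID3 tbar htIcc) (hIC3 tbar htIcc) hInorm
    intro ω
    have h := young_pt δ₃ (c3Fun lam lam' lam'' A X (pathFun pr prHat tbar) ω
        * (prHat (X ω) - pr (X ω)) * (Q0Hat (X ω) - Q0 (X ω)))
      (ghat (v (X ω)) - gstar (v (X ω))) hδ₃
    have h2 : (c3Fun lam lam' lam'' A X (pathFun pr prHat tbar) ω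
        * (prHat (X ω) - pr (X ω)) * (Q0Hat (X ω) - Q0 (X ω))) ^ 2
        = (c3Fun lam lam' lam'' A X (pathFun pr prHat tbar) ω) ^ 2
        * (prHat (X ω) - pr (X ω)) ^ 2 * (Q0Hat (X ω) - Q0 (X ω)) ^ 2 := by ring
    linarith
  -- the cross term in the risk decomposition
  have hf3eq : (fun ω => wFun lam lam' A X prHat ω
        * (phiFun lam lam' A Y X prHat Q0Hat Q1Hat ω - gstar (v (X ω)))
        * (ghat (v (X ω)) - gstar (v (X ω))))
      = fun ω => (1/2) * ((wFun lam lam' A X prHat ω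
          * (phiFun lam lam' A Y X prHat Q0Hat Q1Hat ω - gstar (v (X ω))) ^ 2
        + wFun lam lam' A X prHat ω * (ghat (v (X ω)) - gstar (v (X ω))) ^ 2)
        - wFun lam lam' A X prHat ω
          * (phiFun lam lam' A Y X prHat Q0Hat Q1Hat ω - ghat (v (X ω))) ^ 2) := by
    funext ω; ring
  have hf3int : Integrable (fun ω => wFun lam lam' A X prHat ω
      * (phiFun lam lam' A Y X prHat Q0Hat Q1Hat ω - gstar (v (X ω)))
      * (ghat (v (X ω)) - gstar (v (X ω)))) P := by
    rw [hf3eq]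
    exact ((hIrisk2.add hIcurv).sub hIrisk1).const_mul (1/2)
  -- risk decomposition
  have hsplit : ∫ ω, wFun lam lam' A X prHat ω
        * (phiFun lam lam' A Y X prHat Q0Hat Q1Hat ω - ghat (v (X ω))) ^ 2 ∂P
      = (∫ ω, wFun lam lam' A X prHat ω
          * (phiFun lam lam' A Y X prHat Q0Hat Q1Hat ω - gstar (v (X ω))) ^ 2 ∂P)
        + (∫ ω, wFun lam lam' A X prHat ω * (ghat (v (X ω)) - gstar (v (X ω))) ^ 2 ∂P)
        - 2 * ∫ ω, wFun lam lam' A X prHat ω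
          * (phiFun lam lam' A Y X prHat Q0Hat Q1Hat ω - gstar (v (X ω)))
          * (ghat (v (X ω)) - gstar (v (X ω))) ∂P := by
    have hpt : (fun ω => wFun lam lam' A X prHat ω
          * (phiFun lam lam' A Y X prHat Q0Hat Q1Hat ω - ghat (v (X ω))) ^ 2)
        = fun ω => (wFun lam lam' A X prHat ω
            * (phiFun lam lam' A Y X prHat Q0Hat Q1Hat ω - gstar (v (X ω))) ^ 2
          + wFun lam lam' A X prHat ω * (ghat (v (X ω)) - gstar (v (X ω))) ^ 2)
          - 2 * (wFun lam lam' A X prHat ω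
            * (phiFun lam lam' A Y X prHat Q0Hat Q1Hat ω - gstar (v (X ω)))
            * (ghat (v (X ω)) - gstar (v (X ω)))) := by
      funext ω; ring
    have hadd : Integrable (fun ω => wFun lam lam' A X prHat ω
          * (phiFun lam lam' A Y X prHat Q0Hat Q1Hat ω - gstar (v (X ω))) ^ 2
        + wFun lam lam' A X prHat ω * (ghat (v (X ω)) - gstar (v (X ω))) ^ 2) P :=
      hIrisk2.add hIcurv
    rw [hpt, integral_sub hadd (hf3int.const_mul 2),
      integral_add hIrisk2 hIcurv, integral_const_mul]
  have hpath1 : ∀ (f g : 𝓧 → ℝ) (x : 𝓧), pathFun f g 1 x = g x := by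
    intro f g x; simp [pathFun]
  have hF1 : F 1 = ∫ ω, wFun lam lam' A X prHat ω
      * (phiFun lam lam' A Y X prHat Q0Hat Q1Hat ω - gstar (v (X ω)))
      * (ghat (v (X ω)) - gstar (v (X ω))) ∂P := by
    rw [hFdef 1]
    apply integral_congr_ae
    filter_upwards [hwhat] with ω hw
    have hw' : (A ω - prHat (X ω)) * lam' (prHat (X ω)) + lam (prHat (X ω)) ≠ 0 := by
      simpa [wFun] using hw
    have hp0 : prHat (X ω) ≠ 0 := (hprHat (X ω)).1.ne'
    have hp1 : (1:ℝ) - prHat (X ω) ≠ 0 := by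
      have := (hprHat (X ω)).2; intro h; linarith [sub_eq_zero.mp h]
    simp only [wFun, phiFun, hpath1]
    field_simp
    ring
  have hc : 0 < α / 2 - δ₁ - δ₂ - δ₃ := by linarith
  rw [le_inv_mul_iff₀ hc]
  linarith [hcurv, hTay, hF0, hF'0, hY1, hY2, hY3, hsplit, hF1]
end
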